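/- arXiv:1606.02698 — 2 statements merged into one kernel-verified Lean document; each statement's English description precedes it below -/
import Mathlib

section
/- Let d : X × X × (0,∞) → ℝ be such that for fixed τ, d(·,·,τ) is a metric on X, and suppose there is C > 0 with: for all x₁, x₂ ∈ X and τ ≥ 1, either d(x₁,x₂,τ)/√τ < C or τ ↦ d(x₁,x₂,τ)/√τ is differentiable at τ with nonpositive derivative. If D := sup_{x₁,x₂} d(x₁,x₂,1) < ∞ and each d(x₁,x₂,·) is continuous, then sup_{x₁,x₂} d(x₁,x₂,τ) ≤ max{D, C}·√τ for all τ ≥ 1. -/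
private lemma aux_eps (f : ℝ → ℝ) (M : ℝ)
    (hf : ∀ t : ℝ, 1 ≤ t → ContinuousAt f t)
    (h1 : f 1 ≤ M)
    (hd : ∀ t : ℝ, 1 ≤ t → f t < M ∨ (DifferentiableAt ℝ f t ∧ deriv f t ≤ 0))
    (ε : ℝ) (hε : 0 < ε) (T : ℝ) (hT : 1 ≤ T) :
    f T ≤ M + ε * (T - 1) := by
  by_contra hcon
  push_neg at hcon
  set h : ℝ → ℝ := fun t => f t - ε * (t - 1) with hh
  have hTS : M < h T := by simp only [hh]; linarith
  set S : Set ℝ := {t | t ∈ Set.Icc 1 T ∧ M < h t} with hS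
  have hTmem : T ∈ S := ⟨⟨hT, le_refl T⟩, hTS⟩
  have hSne : S.Nonempty := ⟨T, hTmem⟩
  have hSbd : BddBelow S := ⟨1, fun t ht => ht.1.1⟩
  set s := sInf S with hsdef
  have hs1 : 1 ≤ s := le_csInf hSne (fun t ht => ht.1.1)
  have hsT : s ≤ T := csInf_le hSbd hTmem
  have hch : ContinuousAt h s :=
    (hf s hs1).sub ((continuous_const.mul (continuous_id.sub continuous_const)).continuousAt)
  -- Claim: M ≤ h s
  have hge : M ≤ h s := by
    by_contra hlt
    push_neg at hlt
    have hev : ∀ᶠ t in nhds s, h t < M := hch.eventually_lt continuousAt_const hlt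
    rw [Metric.eventually_nhds_iff] at hev
    obtain ⟨δ, hδ, hball⟩ := hev
    obtain ⟨t, htS, htlt⟩ := exists_lt_of_csInf_lt hSne (show sInf S < s + δ by linarith)
    have hst : s ≤ t := csInf_le hSbd htS
    have : h t < M := hball (by rw [Real.dist_eq, abs_of_nonneg (by linarith)]; linarith)
    exact absurd htS.2 (not_lt.mpr this.le)
  -- Claim: h s ≤ M
  have hle : h s ≤ M := by
    rcases eq_or_lt_of_le hs1 with heq | hlt
    · rw [← heq]; simp only [hh]; simp; linarith
    · by_contra hgt
      push_neg at hgt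
      have hev : ∀ᶠ t in nhds s, M < h t := continuousAt_const.eventually_lt hch hgt
      rw [Metric.eventually_nhds_iff] at hev
      obtain ⟨δ, hδ, hball⟩ := hev
      set t := max (s - δ / 2) ((1 + s) / 2) with htdef
      have ht1 : 1 ≤ t := le_max_of_le_right (by linarith)
      have hts : t < s := max_lt (by linarith) (by linarith)
      have hdist : dist t s < δ := by
        rw [Real.dist_eq, abs_of_nonpos (by linarith)]
        have : s - δ / 2 ≤ t := le_max_left _ _
        linarith
      have htS : t ∈ S := ⟨⟨ht1, le_trans hts.le hsT⟩, hball hdist⟩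
      exact absurd (csInf_le hSbd htS) (not_le.mpr hts)
  have hseq : h s = M := le_antisymm hle hge
  have hfs : M ≤ f s := by
    have : f s = M + ε * (s - 1) := by
      have : h s = f s - ε * (s - 1) := rfl
      linarith [hseq]
    nlinarith
  rcases hd s hs1 with hflt | ⟨hdiff, hder⟩
  · linarith
  · have hder' : HasDerivAt h (deriv f s - ε) s := by
      have h2 : HasDerivAt (fun t : ℝ => ε * (t - 1)) ε s := by
        simpa using ((hasDerivAt_id s).sub_const 1).const_mul ε
      exact hdiff.hasDerivAt.sub h2
    have hneg : deriv f s - ε < 0 := by linarith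
    rw [hasDerivAt_iff_tendsto_slope] at hder'
    have hev : ∀ᶠ t in nhdsWithin s (Set.Ioi s), slope h s t < 0 := by
      have h3 : ∀ᶠ t in nhdsWithin s {s}ᶜ, slope h s t < 0 :=
        hder'.eventually_lt_const hneg
      exact h3.filter_mono (nhdsWithin_mono s (fun t ht => ne_of_gt ht))
    obtain ⟨u, hu, hIoo⟩ := mem_nhdsGT_iff_exists_Ioo_subset.mp hev
    obtain ⟨t, htS, htlt⟩ := exists_lt_of_csInf_lt hSne (show sInf S < u from hu)
    have hst : s ≤ t := csInf_le hSbd htS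
    rcases eq_or_lt_of_le hst with heq | hlt
    · rw [← heq] at htS; linarith [htS.2]
    · have hslope : slope h s t < 0 := hIoo ⟨hlt, htlt⟩
      rw [slope_def_field, div_neg_iff] at hslope
      have hts : 0 < t - s := by linarith
      rcases hslope with ⟨_, h2⟩ | ⟨h1', _⟩
      · linarith
      · have : h t < h s := by
          rw [sub_neg] at h1'
          exact h1'
        linarith [htS.2]

private lemma aux_main (f : ℝ → ℝ) (M : ℝ)
    (hf : ∀ t : ℝ, 1 ≤ t → ContinuousAt f t)
    (h1 : f 1 ≤ M)
    (hd : ∀ t : ℝ, 1 ≤ t → f t < M ∨ (DifferentiableAt ℝ f t ∧ deriv f t ≤ 0))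
    (T : ℝ) (hT : 1 ≤ T) : f T ≤ M := by
  rcases eq_or_lt_of_le hT with heq | hlt
  · rw [← heq]; exact h1
  · refine le_of_forall_pos_le_add (fun ε hε => ?_)
    have := aux_eps f M hf h1 hd (ε / (T - 1)) (div_pos hε (by linarith)) T hT
    calc f T ≤ M + ε / (T - 1) * (T - 1) := this
    _ = M + ε := by rw [div_mul_cancel₀ ε (show T - 1 ≠ 0 from ne_of_gt (by linarith))]

theorem stmt_11 {X : Type*} (d : X → X → ℝ → ℝ) (C D : ℝ) (hC : 0 < C)
    (hrefl : ∀ x : X, ∀ τ : ℝ, 0 < τ → d x x τ = 0)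
    (hsep : ∀ x y : X, ∀ τ : ℝ, 0 < τ → d x y τ = 0 → x = y)
    (hsymm : ∀ x y : X, ∀ τ : ℝ, 0 < τ → d x y τ = d y x τ)
    (htri : ∀ x y z : X, ∀ τ : ℝ, 0 < τ → d x z τ ≤ d x y τ + d y z τ)
    (hdich : ∀ x y : X, ∀ τ : ℝ, 1 ≤ τ →
      d x y τ / Real.sqrt τ < C ∨
      (DifferentiableAt ℝ (fun t => d x y t / Real.sqrt t) τ ∧
        deriv (fun t => d x y t / Real.sqrt t) τ ≤ 0))
    (hD : ∀ x y : X, d x y 1 ≤ D)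
    (hcont : ∀ x y : X, Continuous (fun τ => d x y τ)) :
    ∀ τ : ℝ, 1 ≤ τ → ∀ x y : X, d x y τ ≤ max D C * Real.sqrt τ := by
  intro τ hτ x y
  set f : ℝ → ℝ := fun t => d x y t / Real.sqrt t with hf
  set M : ℝ := max D C with hM
  have hcf : ∀ t : ℝ, 1 ≤ t → ContinuousAt f t := by
    intro t ht
    exact ((hcont x y).continuousAt).div (Real.continuous_sqrt.continuousAt)
      (by positivity)
  have h1 : f 1 ≤ M := by
    simp only [hf, Real.sqrt_one, div_one]
    exact le_trans (hD x y) (le_max_left _ _)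
  have hd : ∀ t : ℝ, 1 ≤ t → f t < M ∨ (DifferentiableAt ℝ f t ∧ deriv f t ≤ 0) := by
    intro t ht
    rcases hdich x y t ht with hlt | hdiff
    · exact Or.inl (lt_of_lt_of_le hlt (le_max_right _ _))
    · exact Or.inr hdiff
  have := aux_main f M hcf h1 hd τ hτ
  have hsq : 0 < Real.sqrt τ := Real.sqrt_pos.mpr (by linarith)
  rw [hf] at this
  calc d x y τ = d x y τ / Real.sqrt τ * Real.sqrt τ := by field_simp
  _ ≤ M * Real.sqrt τ := by exact mul_le_mul_of_nonneg_right this hsq.le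
end

section
/- Let h : [1, ∞) → ℝ be continuous, and suppose for each τ in (1,∞) with h(τ) ≥ C (where C > 0 is fixed), h is differentiable at τ with h'(τ) ≤ 0. Then h(τ) ≤ max{h(1), C} for all τ ≥ 1. -/
theorem stmt_12 (h : ℝ → ℝ) (C : ℝ) (hC : 0 < C)
    (hcont : ContinuousOn h (Set.Ici 1))
    (hder : ∀ τ : ℝ, 1 < τ → h τ ≥ C →
      DifferentiableAt ℝ h τ ∧ deriv h τ ≤ 0) :
    ∀ τ : ℝ, 1 ≤ τ → h τ ≤ max (h 1) C := by
  intro τ hτ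
  by_contra hlt
  push_neg at hlt
  set M := max (h 1) C with hM
  set S : Set ℝ := Set.Icc 1 τ ∩ h ⁻¹' Set.Iic M with hS
  have hSne : S.Nonempty := ⟨1, ⟨le_refl 1, hτ⟩, show h 1 ≤ M from le_max_left _ _⟩
  have hsub : Set.Icc (1:ℝ) τ ⊆ Set.Ici 1 := fun x hx => hx.1
  have hSclosed : IsClosed S :=
    (hcont.mono hsub).preimage_isClosed_of_isClosed isClosed_Icc isClosed_Iic
  have hScomp : IsCompact S := isCompact_Icc.of_isClosed_subset hSclosed
    Set.inter_subset_left
  set s := sSup S with hs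
  have hsmem : s ∈ S := hScomp.sSup_mem hSne
  have hs1 : 1 ≤ s := hsmem.1.1
  have hsτ : s ≤ τ := hsmem.1.2
  have hsM : h s ≤ M := hsmem.2
  have hsltτ : s < τ := by
    rcases lt_or_eq_of_le hsτ with hlt' | heq
    · exact hlt'
    · exact absurd (heq ▸ hsM) (not_le.mpr hlt)
  -- on (s, τ], h > M
  have hgt : ∀ x, s < x → x ≤ τ → M < h x := by
    intro x hx hxτ
    by_contra hxM
    push_neg at hxM
    have : x ∈ S := ⟨⟨hs1.trans hx.le, hxτ⟩, hxM⟩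
    exact absurd (le_csSup hScomp.bddAbove this) (not_le.mpr hx)
  -- h is antitone on [s, τ]
  have hanti : AntitoneOn h (Set.Icc s τ) := by
    apply antitoneOn_of_deriv_nonpos (convex_Icc s τ)
    · exact hcont.mono (fun x hx => hs1.trans hx.1)
    · rw [interior_Icc]
      intro x hx
      have h1x : 1 < x := lt_of_le_of_lt hs1 hx.1
      have hCx : C ≤ h x := le_of_lt (lt_of_le_of_lt (le_max_right _ _)
        (hgt x hx.1 hx.2.le))
      exact (hder x h1x hCx).1.differentiableWithinAt
    · rw [interior_Icc]
      intro x hx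
      have h1x : 1 < x := lt_of_le_of_lt hs1 hx.1
      have hCx : C ≤ h x := le_of_lt (lt_of_le_of_lt (le_max_right _ _)
        (hgt x hx.1 hx.2.le))
      exact (hder x h1x hCx).2
  have : h τ ≤ h s := hanti ⟨le_refl s, hsτ⟩ ⟨hsτ, le_refl τ⟩ hsτ
  exact absurd (this.trans hsM) (not_le.mpr hlt)
end
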